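/- Consider L cells with disjoint device sets K_ℓ. Suppose the power vector (p̃_k)_{k∈K} with p̃_k ∈ [0, P̄_k] and denoising factors (η̃_ℓ) achieve a Pareto-optimal MSE tuple (Φ₁,…,Φ_L), where Φ_ℓ = ∑_{k∈K_ℓ}(√(p̃_k)h_k/√(η̃_ℓ) − 1)² + (σ² + ∑_{j≠ℓ} ∑_{i∈K_j} p̃_i ĝ_{i,ℓ}²)/η̃_ℓ, and Pareto optimality means no other feasible (p, η) achieves MSE ≤ Φ_ℓ in every cell with strict inequality in some cell. Define IT levels Γ_{ℓ,j} = ∑_{k∈K_ℓ} p̃_k ĝ_{k,j}² for all ℓ ≠ j. Then for each cell ℓ, the pair ((p̃_k)_{k∈K_ℓ}, η̃_ℓ) is an optimal solution of the single-cell problem: minimize ∑_{k∈K_ℓ}(√(p_k)h_k/√η − 1)² + (σ² + ∑_{j≠ℓ} Γ_{j,ℓ})/η subject to ∑_{k∈K_ℓ} p_k ĝ_{k,j}² ≤ Γ_{ℓ,j} for all j ≠ ℓ and 0 ≤ p_k ≤ P̄_k; and its optimal value equals Φ_ℓ. -/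

import Mathlib

open Finset

theorem stmt12 {ι κ : Type*} [DecidableEq ι] (L : Finset ι) (hL : L.Nonempty)
    (Kc : ι → Finset κ)
    (hdisj : ∀ ℓ ∈ L, ∀ j ∈ L, ℓ ≠ j → Disjoint (Kc ℓ) (Kc j))
    (h : κ → ℝ) (hh : ∀ k, 0 < h k)
    (g : κ → ι → ℝ) (σ2 : ℝ) (hσ : 0 < σ2)
    (Pb : κ → ℝ) (hPb : ∀ k, 0 < Pb k)
    (pt : κ → ℝ) (hpt : ∀ k, 0 ≤ pt k ∧ pt k ≤ Pb k)
    (ηt : ι → ℝ) (hηt : ∀ ℓ ∈ L, 0 < ηt ℓ)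
    (MSE : ι → (κ → ℝ) → ℝ → ℝ)
    (hMSE : ∀ ℓ ∈ L, ∀ p η,
      MSE ℓ p η = (∑ k ∈ Kc ℓ, (Real.sqrt (p k) * h k / Real.sqrt η - 1) ^ 2) +
        (σ2 + ∑ j ∈ L.erase ℓ, ∑ i ∈ Kc j, p i * (g i ℓ) ^ 2) / η)
    (hPareto : ¬ ∃ (p : κ → ℝ) (η : ι → ℝ),
      (∀ k, 0 ≤ p k ∧ p k ≤ Pb k) ∧ (∀ ℓ ∈ L, 0 < η ℓ) ∧
      (∀ ℓ ∈ L, MSE ℓ p (η ℓ) ≤ MSE ℓ pt (ηt ℓ)) ∧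
      (∃ ℓ ∈ L, MSE ℓ p (η ℓ) < MSE ℓ pt (ηt ℓ)))
    (Γ : ι → ι → ℝ) (hΓ : ∀ ℓ j, Γ ℓ j = ∑ k ∈ Kc ℓ, pt k * (g k j) ^ 2)
    (SC : ι → (κ → ℝ) → ℝ → ℝ)
    (hSC : ∀ ℓ ∈ L, ∀ p η,
      SC ℓ p η = (∑ k ∈ Kc ℓ, (Real.sqrt (p k) * h k / Real.sqrt η - 1) ^ 2) +
        (σ2 + ∑ j ∈ L.erase ℓ, Γ j ℓ) / η) :
    ∀ ℓ ∈ L,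
      (SC ℓ pt (ηt ℓ) = MSE ℓ pt (ηt ℓ)) ∧
      (∀ j ∈ L.erase ℓ, ∑ k ∈ Kc ℓ, pt k * (g k j) ^ 2 ≤ Γ ℓ j) ∧
      (∀ (p : κ → ℝ) (η : ℝ), 0 < η →
        (∀ k ∈ Kc ℓ, 0 ≤ p k ∧ p k ≤ Pb k) →
        (∀ j ∈ L.erase ℓ, ∑ k ∈ Kc ℓ, p k * (g k j) ^ 2 ≤ Γ ℓ j) →
        SC ℓ pt (ηt ℓ) ≤ SC ℓ p η) := by
    classical
  intro ℓ hℓ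
  have hnotin : ∀ j ∈ L.erase ℓ, ∀ i ∈ Kc j, i ∉ Kc ℓ := by
    intro j hj i hi
    exact (Finset.disjoint_left.mp
      (hdisj j (mem_of_mem_erase hj) ℓ hℓ (ne_of_mem_erase hj))) hi
  have heq : SC ℓ pt (ηt ℓ) = MSE ℓ pt (ηt ℓ) := by
    rw [hSC ℓ hℓ, hMSE ℓ hℓ]
    simp only [hΓ]
  refine ⟨heq, ?_, ?_⟩
  · intro j hj; rw [hΓ]
  · intro p η hη hp hcon
    by_contra hlt
    push_neg at hlt
    set p' : κ → ℝ := fun k => if k ∈ Kc ℓ then p k else pt k with hp'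
    set η' : ι → ℝ := fun m => if m = ℓ then η else ηt m with hη'
    apply hPareto
    refine ⟨p', η', ?_, ?_, ?_, ?_⟩
    · intro k
      by_cases hk : k ∈ Kc ℓ
      · simp only [hp', hk, if_pos]; exact hp k hk
      · simp only [hp', hk, if_neg, ite_false]; exact hpt k
    · intro m hm
      by_cases hm' : m = ℓ
      · simp [hη', hm', hη]
      · simp [hη', hm', hηt m hm]
    · -- all cells weakly improve
      intro m hm
      by_cases hm' : m = ℓ
      · subst hm'
        have hval : MSE m p' (η' m) = SC m p η := by
          rw [hMSE m hm, hSC m hm]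
          congr 1
          · apply Finset.sum_congr rfl
            intro k hk
            simp [hp', hk, hη']
          · have : ∀ j ∈ L.erase m, (∑ i ∈ Kc j, p' i * (g i m) ^ 2) = Γ j m := by
              intro j hj
              rw [hΓ]
              apply Finset.sum_congr rfl
              intro i hi
              have := hnotin j hj i hi
              simp [hp', this]
            rw [Finset.sum_congr rfl this]
            simp [hη']
        rw [hval, heq.symm]
        exact le_of_lt hlt
      · have hmL := hm
        have hηtm := hηt m hm
        rw [hMSE m hm, hMSE m hm]
        have h1 : (∑ k ∈ Kc m, (Real.sqrt (p' k) * h k / Real.sqrt (η' m) - 1) ^ 2)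
            = ∑ k ∈ Kc m, (Real.sqrt (pt k) * h k / Real.sqrt (ηt m) - 1) ^ 2 := by
          apply Finset.sum_congr rfl
          intro k hk
          have hkℓ : k ∉ Kc ℓ :=
            (Finset.disjoint_left.mp (hdisj m hm ℓ hℓ hm')) hk
          simp [hp', hη', hkℓ, hm']
        rw [h1]
        have h2 : (∑ j ∈ L.erase m, ∑ i ∈ Kc j, p' i * (g i m) ^ 2)
            ≤ ∑ j ∈ L.erase m, ∑ i ∈ Kc j, pt i * (g i m) ^ 2 := by
          apply Finset.sum_le_sum
          intro j hj
          by_cases hjℓ : j = ℓ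
          · subst hjℓ
            have : (∑ i ∈ Kc j, p' i * (g i m) ^ 2) = ∑ i ∈ Kc j, p i * (g i m) ^ 2 := by
              apply Finset.sum_congr rfl
              intro i hi
              simp [hp', hi]
            rw [this]
            have hmem : m ∈ L.erase j := Finset.mem_erase.mpr ⟨hm', hm⟩
            calc (∑ i ∈ Kc j, p i * (g i m) ^ 2) ≤ Γ j m := hcon m hmem
              _ = ∑ i ∈ Kc j, pt i * (g i m) ^ 2 := hΓ j m
          · apply le_of_eq
            apply Finset.sum_congr rfl
            intro i hi
            have hiℓ : i ∉ Kc ℓ := by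
              intro hiℓ
              have hdj := hdisj j (mem_of_mem_erase hj) ℓ hℓ hjℓ
              exact (Finset.disjoint_left.mp hdj) hi hiℓ
            simp [hp', hiℓ]
        have hηm : η' m = ηt m := by simp [hη', hm']
        rw [hηm]
        apply add_le_add le_rfl
        have : σ2 + (∑ j ∈ L.erase m, ∑ i ∈ Kc j, p' i * g i m ^ 2)
            ≤ σ2 + ∑ j ∈ L.erase m, ∑ i ∈ Kc j, pt i * g i m ^ 2 := by linarith
        exact div_le_div_of_nonneg_right this hηtm.le
    · refine ⟨ℓ, hℓ, ?_⟩
      have hval : MSE ℓ p' (η' ℓ) = SC ℓ p η := by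
        rw [hMSE ℓ hℓ, hSC ℓ hℓ]
        congr 1
        · apply Finset.sum_congr rfl
          intro k hk
          simp [hp', hk, hη']
        · have : ∀ j ∈ L.erase ℓ, (∑ i ∈ Kc j, p' i * (g i ℓ) ^ 2) = Γ j ℓ := by
            intro j hj
            rw [hΓ]
            apply Finset.sum_congr rfl
            intro i hi
            have := hnotin j hj i hi
            simp [hp', this]
          rw [Finset.sum_congr rfl this]
          simp [hη']
      rw [hval, heq.symm]
      exact hlt
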